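/- Let (G,c) be a t-coloured graph and T=(k_1,…,k_t) a colour budget. Suppose there is a colour i* with c_{i*}(V(G)) = k_{i*}. Let X = {v ∈ V(G) : i* ∈ c(v)} and, for each i, let k'_i = k_i − c_i(X). Then G has a T-fair vertex cover if and only if G − X has a (k'_1,…,k'_t)-fair vertex cover (with colouring restricted to V(G)∖X). -/
import Mathlib


open Finset

/-- Reduction rule: if colour `i*` satisfies `c_{i*}(V(G)) = k_{i*}`, then, with
`X` the set of vertices of colour `i*`, `G` has a `T`-fair vertex cover iff
`G - X` has a `(k_i - c_i(X))_i`-fair vertex cover.  A vertex cover of `G - X`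
is encoded as a set `S'` disjoint from `X` covering all edges with both
endpoints outside `X`, and the reduced budgets are expressed over `ℤ`. -/
theorem stmt2 {V : Type*} [Fintype V] [DecidableEq V] (G : SimpleGraph V)
    {t : ℕ} (c : V → Finset (Fin t)) (hc : ∀ v, (c v).Nonempty)
    (k : Fin t → ℕ) (istar : Fin t)
    (h : (Finset.univ.filter (fun v => istar ∈ c v)).card = k istar) :
    (∃ S : Finset V,
        (∀ u v, G.Adj u v → u ∈ S ∨ v ∈ S) ∧
        (∀ i, (S.filter (fun v => i ∈ c v)).card = k i))
    ↔ (∃ S' : Finset V,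
        (∀ v ∈ S', istar ∉ c v) ∧
        (∀ u v, G.Adj u v → istar ∉ c u → istar ∉ c v → u ∈ S' ∨ v ∈ S') ∧
        (∀ i, ((S'.filter (fun v => i ∈ c v)).card : ℤ)
          = (k i : ℤ)
            - (((Finset.univ.filter (fun v => istar ∈ c v)).filter
                (fun v => i ∈ c v)).card : ℤ))) := by
  set X : Finset V := Finset.univ.filter (fun v => istar ∈ c v) with hX
  constructor
  · rintro ⟨S, hcov, hcount⟩
    -- X ⊆ S
    have hsub : S.filter (fun v => istar ∈ c v) ⊆ X := by
      intro v hv; simp [hX]; exact (Finset.mem_filter.mp hv).2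
    have heq : S.filter (fun v => istar ∈ c v) = X := by
      apply Finset.eq_of_subset_of_card_le hsub
      rw [hcount istar, ← h]
    have hXS : X ⊆ S := by
      intro v hv
      rw [← heq] at hv
      exact (Finset.mem_filter.mp hv).1
    refine ⟨S \ X, ?_, ?_, ?_⟩
    · intro v hv
      have := (Finset.mem_sdiff.mp hv).2
      simp [hX] at this; exact this
    · intro u v hadj hu hv
      rcases hcov u v hadj with h1 | h1
      · left; exact Finset.mem_sdiff.mpr ⟨h1, by simp [hX, hu]⟩
      · right; exact Finset.mem_sdiff.mpr ⟨h1, by simp [hX, hv]⟩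
    · intro i
      have hdecomp : S.filter (fun v => i ∈ c v)
          = (S \ X).filter (fun v => i ∈ c v) ∪ X.filter (fun v => i ∈ c v) := by
        rw [← Finset.filter_union, Finset.sdiff_union_of_subset hXS]
      have hdisj : Disjoint ((S \ X).filter (fun v => i ∈ c v))
          (X.filter (fun v => i ∈ c v)) :=
        Finset.disjoint_filter_filter (Finset.sdiff_disjoint)
      have hcard := hcount i
      rw [hdecomp, Finset.card_union_of_disjoint hdisj] at hcard
      have : ((S \ X).filter (fun v => i ∈ c v)).card
          + (X.filter (fun v => i ∈ c v)).card = k i := hcard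
      omega
  · rintro ⟨S', hdisjX, hcov, hcount⟩
    refine ⟨S' ∪ X, ?_, ?_⟩
    · intro u v hadj
      by_cases hu : istar ∈ c u
      · left; exact Finset.mem_union_right _ (by simp [hX, hu])
      by_cases hv : istar ∈ c v
      · right; exact Finset.mem_union_right _ (by simp [hX, hv])
      rcases hcov u v hadj hu hv with h1 | h1
      · exact Or.inl (Finset.mem_union_left _ h1)
      · exact Or.inr (Finset.mem_union_left _ h1)
    · intro i
      have hdisj : Disjoint (S'.filter (fun v => i ∈ c v))
          (X.filter (fun v => i ∈ c v)) := by
        apply Finset.disjoint_filter_filter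
        rw [Finset.disjoint_left]
        intro v hv hvX
        exact hdisjX v hv (by simpa [hX] using hvX)
      have hcard : ((S' ∪ X).filter (fun v => i ∈ c v)).card
          = (S'.filter (fun v => i ∈ c v)).card + (X.filter (fun v => i ∈ c v)).card := by
        rw [Finset.filter_union, Finset.card_union_of_disjoint hdisj]
      have hz := hcount i
      have : ((S'.filter (fun v => i ∈ c v)).card : ℤ)
          + ((X.filter (fun v => i ∈ c v)).card : ℤ) = (k i : ℤ) := by
        rw [hz]; ring
      omega
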